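/- For X ≥ 2, Σ_{n ≤ X} d(n²)² ≪ X (log X)^8, where d denotes the number-of-divisors function; precisely, there is an absolute constant C such that Σ_{n ≤ X} d(n²)² ≤ C · X · (log X)^8 for all X ≥ 2. -/

import Mathlib

open Finset ArithmeticFunction
open scoped ArithmeticFunction.zeta

private lemma zeta_pow_mult (j : ℕ) :
    (ζ ^ (j + 1) : ArithmeticFunction ℕ).IsMultiplicative := by
  induction j with
  | zero => simpa using isMultiplicative_zeta
  | succ j ih => rw [pow_succ]; exact ih.mul isMultiplicative_zeta

private lemma zeta_pow_prime_pow {p : ℕ} (hp : p.Prime) (j : ℕ) :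
    ∀ k : ℕ, (ζ ^ (j + 1) : ArithmeticFunction ℕ) (p ^ k) = (k + j).choose j := by
  induction j with
  | zero =>
      intro k
      simp [pow_one, zeta_apply_ne (pow_ne_zero _ hp.pos.ne')]
  | succ j ih =>
      intro k
      rw [pow_succ, mul_zeta_apply, Nat.sum_divisors_prime_pow hp]
      simp only [ih]
      rw [Nat.sum_range_add_choose k j, Nat.add_assoc]

private lemma choose_ineq : ∀ k : ℕ, (2 * k + 1) ^ 2 ≤ (k + 8).choose 8 := by
  intro k
  induction k with
  | zero => simp
  | succ k ih =>
      have hid := Nat.choose_mul_succ_eq (k + 8) 8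
      -- (k+8).choose 8 * (k+9) = (k+9).choose 8 * (k+1)
      have hid' : (k + 8).choose 8 * (k + 9) = (k + 9).choose 8 * (k + 1) := by
        simpa using hid
      have h1 : (2 * (k + 1) + 1) ^ 2 * (k + 1) ≤ (2 * k + 1) ^ 2 * (k + 9) := by nlinarith
      have h2 : (2 * k + 1) ^ 2 * (k + 9) ≤ (k + 8).choose 8 * (k + 9) :=
        Nat.mul_le_mul_right _ ih
      have h3 : (2 * (k + 1) + 1) ^ 2 * (k + 1) ≤ (k + 9).choose 8 * (k + 1) := by
        calc (2 * (k + 1) + 1) ^ 2 * (k + 1) ≤ (2 * k + 1) ^ 2 * (k + 9) := h1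
          _ ≤ (k + 8).choose 8 * (k + 9) := h2
          _ = (k + 9).choose 8 * (k + 1) := hid'
      have := Nat.le_of_mul_le_mul_right h3 (Nat.succ_pos k)
      simpa [Nat.add_comm, Nat.add_assoc, Nat.add_left_comm] using this

private lemma dsq_le (n : ℕ) (hn : n ≠ 0) :
    ((n ^ 2).divisors.card) ^ 2 ≤ (ζ ^ 9 : ArithmeticFunction ℕ) n := by
  have hmul : ∀ x y : ℕ, Nat.Coprime x y →
      (((x * y) ^ 2).divisors.card) ^ 2 = ((x ^ 2).divisors.card) ^ 2 * ((y ^ 2).divisors.card) ^ 2 := by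
    intro x y hxy
    rw [mul_pow, Nat.Coprime.card_divisors_mul (hxy.pow _ _), mul_pow]
  have h1 : (((1 : ℕ) ^ 2).divisors.card) ^ 2 = 1 := by simp
  have hf := Nat.multiplicative_factorization (fun m => ((m ^ 2).divisors.card) ^ 2) hmul h1 hn
  have hg := (zeta_pow_mult 8).multiplicative_factorization _ hn
  have hf2 : ((n ^ 2).divisors.card) ^ 2
      = n.factorization.prod fun p k => (((p ^ k) ^ 2).divisors.card) ^ 2 := hf
  rw [hf2, show (9 : ℕ) = 8 + 1 from rfl, hg]
  rw [Finsupp.prod, Finsupp.prod]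
  apply Finset.prod_le_prod'
  intro p hp
  have hpp : p.Prime := Nat.prime_of_mem_primeFactors (by
    rwa [Nat.support_factorization] at hp)
  set k := n.factorization p
  have hd : (((p ^ k) ^ 2).divisors.card) = 2 * k + 1 := by
    rw [← pow_mul]
    rw [Nat.divisors_prime_pow hpp, Finset.card_map, Finset.card_range]
    ring
  rw [hd, zeta_pow_prime_pow hpp 8 k]
  exact choose_ineq k

private lemma swap_sum (N : ℕ) (F : ℕ → ℕ → ℝ) :
    ∑ n ∈ Icc 1 N, ∑ e ∈ n.divisors, F e (n / e) =
      ∑ e ∈ Icc 1 N, ∑ m ∈ Icc 1 (N / e), F e m := by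
  rw [Finset.sum_sigma' (Icc 1 N) (fun n => n.divisors) (fun n e => F e (n / e)),
    Finset.sum_sigma' (Icc 1 N) (fun e => Icc 1 (N / e)) (fun e m => F e m)]
  refine Finset.sum_bij' (fun x _ => ⟨x.2, x.1 / x.2⟩) (fun y _ => ⟨y.1 * y.2, y.1⟩)
    ?_ ?_ ?_ ?_ ?_
  · rintro ⟨n, e⟩ hx
    rw [Finset.mem_sigma, Finset.mem_Icc] at hx
    dsimp only at hx ⊢
    obtain ⟨⟨hn1, hnN⟩, he⟩ := hx
    rw [Nat.mem_divisors] at he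
    obtain ⟨hdvd, hne⟩ := he
    have he1 : 1 ≤ e := Nat.pos_of_dvd_of_pos hdvd (by omega)
    have heN : e ≤ N := le_trans (Nat.le_of_dvd (by omega) hdvd) hnN
    rw [Finset.mem_sigma, Finset.mem_Icc, Finset.mem_Icc]
    refine ⟨⟨he1, heN⟩, ?_, Nat.div_le_div_right hnN⟩
    rw [Nat.one_le_div_iff (by omega)]
    exact Nat.le_of_dvd (by omega) hdvd
  · rintro ⟨e, m⟩ hy
    rw [Finset.mem_sigma, Finset.mem_Icc, Finset.mem_Icc] at hy
    dsimp only at hy ⊢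
    obtain ⟨⟨he1, heN⟩, hm1, hmN⟩ := hy
    have hem : e * m ≤ N := by
      rw [Nat.le_div_iff_mul_le (by omega)] at hmN
      calc e * m = m * e := Nat.mul_comm e m
        _ ≤ N := hmN
    rw [Finset.mem_sigma, Finset.mem_Icc, Nat.mem_divisors]
    have hpos : 0 < e * m := Nat.mul_pos (by omega) (by omega)
    exact ⟨⟨hpos, hem⟩, dvd_mul_right e m, hpos.ne'⟩
  · rintro ⟨n, e⟩ hx
    rw [Finset.mem_sigma, Finset.mem_Icc] at hx
    dsimp only at hx ⊢
    obtain ⟨⟨hn1, hnN⟩, he⟩ := hx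
    rw [Nat.mem_divisors] at he
    rw [Nat.mul_div_cancel' he.1]
  · rintro ⟨e, m⟩ hy
    rw [Finset.mem_sigma, Finset.mem_Icc, Finset.mem_Icc] at hy
    dsimp only at hy ⊢
    obtain ⟨⟨he1, heN⟩, hm1, hmN⟩ := hy
    rw [Nat.mul_div_cancel_left _ (by omega)]
  · rintro ⟨n, e⟩ _
    rfl

private lemma sum_inv_le (M N : ℕ) (hMN : M ≤ N) :
    ∑ m ∈ Icc 1 M, (m : ℝ)⁻¹ ≤ 1 + Real.log N := by
  have h1 : ∑ m ∈ Icc 1 M, (m : ℝ)⁻¹ ≤ ∑ m ∈ Icc 1 N, (m : ℝ)⁻¹ := by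
    apply Finset.sum_le_sum_of_subset_of_nonneg (Finset.Icc_subset_Icc_right hMN)
    intro i _ _
    positivity
  refine h1.trans ?_
  have h2 := harmonic_le_one_add_log N
  rw [harmonic_eq_sum_Icc] at h2
  push_cast at h2
  exact h2

private lemma tau_div_sum (j N : ℕ) (hN : 1 ≤ N) :
    ∑ n ∈ Icc 1 N, ((ζ ^ (j + 1) : ArithmeticFunction ℕ) n : ℝ) / n
      ≤ (1 + Real.log N) ^ (j + 1) := by
  have hlog : (0 : ℝ) ≤ 1 + Real.log N := by
    have : (0 : ℝ) ≤ Real.log N := Real.log_nonneg (by exact_mod_cast hN)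
    linarith
  induction j with
  | zero =>
      rw [pow_one, pow_one]
      have : ∀ n ∈ Icc 1 N, ((ζ : ArithmeticFunction ℕ) n : ℝ) / n = (n : ℝ)⁻¹ := by
        intro n hn
        rw [Finset.mem_Icc] at hn
        rw [zeta_apply_ne (by omega)]
        simp [one_div]
      rw [Finset.sum_congr rfl this]
      exact sum_inv_le N N le_rfl
  | succ j ih =>
      have step1 : ∑ n ∈ Icc 1 N, ((ζ ^ (j + 2) : ArithmeticFunction ℕ) n : ℝ) / n
          = ∑ n ∈ Icc 1 N, ∑ e ∈ n.divisors,
              ((ζ ^ (j + 1) : ArithmeticFunction ℕ) e : ℝ) / (e * (n / e : ℕ)) := by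
        apply Finset.sum_congr rfl
        intro n hn
        rw [Finset.mem_Icc] at hn
        rw [show (j + 2) = (j + 1) + 1 from rfl, pow_succ, mul_zeta_apply]
        push_cast
        rw [Finset.sum_div]
        apply Finset.sum_congr rfl
        intro e he
        rw [Nat.mem_divisors] at he
        have : (e : ℝ) * ((n / e : ℕ) : ℝ) = (n : ℝ) := by
          rw [← Nat.cast_mul, Nat.mul_div_cancel' he.1]
        rw [this]
      rw [step1, swap_sum N (fun e m => ((ζ ^ (j + 1) : ArithmeticFunction ℕ) e : ℝ) / (e * m))]
      have step2 : ∀ e ∈ Icc 1 N,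
          ∑ m ∈ Icc 1 (N / e), ((ζ ^ (j + 1) : ArithmeticFunction ℕ) e : ℝ) / (e * m)
            ≤ (((ζ ^ (j + 1) : ArithmeticFunction ℕ) e : ℝ) / e) * (1 + Real.log N) := by
        intro e he
        have : ∑ m ∈ Icc 1 (N / e), ((ζ ^ (j + 1) : ArithmeticFunction ℕ) e : ℝ) / (e * m)
            = (((ζ ^ (j + 1) : ArithmeticFunction ℕ) e : ℝ) / e) * ∑ m ∈ Icc 1 (N / e), (m : ℝ)⁻¹ := by
          rw [Finset.mul_sum]
          apply Finset.sum_congr rfl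
          intro m _
          rw [div_mul_eq_div_div]
          rw [div_eq_mul_inv]
        rw [this]
        apply mul_le_mul_of_nonneg_left
        · exact sum_inv_le (N / e) N (Nat.div_le_self N e)
        · positivity
      calc ∑ e ∈ Icc 1 N, ∑ m ∈ Icc 1 (N / e),
              ((ζ ^ (j + 1) : ArithmeticFunction ℕ) e : ℝ) / (e * m)
          ≤ ∑ e ∈ Icc 1 N, (((ζ ^ (j + 1) : ArithmeticFunction ℕ) e : ℝ) / e) * (1 + Real.log N) :=
            Finset.sum_le_sum step2
        _ = (∑ e ∈ Icc 1 N, ((ζ ^ (j + 1) : ArithmeticFunction ℕ) e : ℝ) / e) * (1 + Real.log N) := by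
            rw [Finset.sum_mul]
        _ ≤ (1 + Real.log N) ^ (j + 1) * (1 + Real.log N) :=
            mul_le_mul_of_nonneg_right ih hlog
        _ = (1 + Real.log N) ^ (j + 2) := by ring

private lemma tau_sum (N : ℕ) (hN : 1 ≤ N) :
    ∑ n ∈ Icc 1 N, ((ζ ^ 9 : ArithmeticFunction ℕ) n : ℝ)
      ≤ (N : ℝ) * (1 + Real.log N) ^ 8 := by
  have step1 : ∑ n ∈ Icc 1 N, ((ζ ^ 9 : ArithmeticFunction ℕ) n : ℝ)
      = ∑ n ∈ Icc 1 N, ∑ e ∈ n.divisors, ((ζ ^ 8 : ArithmeticFunction ℕ) e : ℝ) := by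
    apply Finset.sum_congr rfl
    intro n _
    rw [show (9 : ℕ) = 8 + 1 from rfl, pow_succ, mul_zeta_apply]
    push_cast
    rfl
  rw [step1, swap_sum N (fun e _ => ((ζ ^ 8 : ArithmeticFunction ℕ) e : ℝ))]
  have step2 : ∀ e ∈ Icc 1 N,
      ∑ _m ∈ Icc 1 (N / e), ((ζ ^ 8 : ArithmeticFunction ℕ) e : ℝ)
        ≤ (N : ℝ) * (((ζ ^ 8 : ArithmeticFunction ℕ) e : ℝ) / e) := by
    intro e he
    rw [Finset.mem_Icc] at he
    rw [Finset.sum_const, Nat.card_Icc, nsmul_eq_mul]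
    have hcast : ((N / e + 1 - 1 : ℕ) : ℝ) = ((N / e : ℕ) : ℝ) := by norm_num
    rw [hcast]
    have h1 : ((N / e : ℕ) : ℝ) ≤ (N : ℝ) / e := Nat.cast_div_le
    have h2 : (0 : ℝ) ≤ ((ζ ^ 8 : ArithmeticFunction ℕ) e : ℝ) := Nat.cast_nonneg _
    calc ((N / e : ℕ) : ℝ) * ((ζ ^ 8 : ArithmeticFunction ℕ) e : ℝ)
        ≤ (N : ℝ) / e * ((ζ ^ 8 : ArithmeticFunction ℕ) e : ℝ) :=
          mul_le_mul_of_nonneg_right h1 h2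
      _ = (N : ℝ) * (((ζ ^ 8 : ArithmeticFunction ℕ) e : ℝ) / e) := by ring
  calc ∑ e ∈ Icc 1 N, ∑ _m ∈ Icc 1 (N / e), ((ζ ^ 8 : ArithmeticFunction ℕ) e : ℝ)
      ≤ ∑ e ∈ Icc 1 N, (N : ℝ) * (((ζ ^ 8 : ArithmeticFunction ℕ) e : ℝ) / e) :=
        Finset.sum_le_sum step2
    _ = (N : ℝ) * ∑ e ∈ Icc 1 N, ((ζ ^ 8 : ArithmeticFunction ℕ) e : ℝ) / e := by
        rw [Finset.mul_sum]
    _ ≤ (N : ℝ) * (1 + Real.log N) ^ 8 := by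
        apply mul_le_mul_of_nonneg_left _ (Nat.cast_nonneg N)
        exact tau_div_sum 7 N hN

theorem stmt_10 :
    ∃ C : ℝ, 0 < C ∧ ∀ X : ℝ, 2 ≤ X →
      ∑ n ∈ Finset.Icc 1 ⌊X⌋₊, ((Nat.divisors (n ^ 2)).card : ℝ) ^ 2 ≤
        C * X * Real.log X ^ 8 := by
  refine ⟨(5 / 2) ^ 8, by positivity, ?_⟩
  intro X hX
  set N := ⌊X⌋₊ with hNdef
  have hX0 : (0 : ℝ) < X := by linarith
  have hN1 : 1 ≤ N := by
    rw [hNdef]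
    exact Nat.le_floor (by exact_mod_cast (by linarith : (1 : ℝ) ≤ X))
  have hNX : (N : ℝ) ≤ X := Nat.floor_le hX0.le
  have hlogN : Real.log N ≤ Real.log X := by
    rcases eq_or_lt_of_le hN1 with h | h
    · rw [← h]
      simp only [Nat.cast_one, Real.log_one]
      exact Real.log_nonneg (by linarith)
    · exact Real.log_le_log (by exact_mod_cast Nat.lt_of_lt_of_le Nat.zero_lt_one hN1) hNX
  have hlog2 : (2 : ℝ) / 3 ≤ Real.log X := by
    have h1 : Real.log 2 ≤ Real.log X := Real.log_le_log (by norm_num) hX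
    have h2 := Real.log_two_gt_d9
    linarith
  have hlogX0 : (0 : ℝ) ≤ Real.log X := by linarith
  have step1 : ∑ n ∈ Finset.Icc 1 N, ((Nat.divisors (n ^ 2)).card : ℝ) ^ 2
      ≤ ∑ n ∈ Finset.Icc 1 N, ((ζ ^ 9 : ArithmeticFunction ℕ) n : ℝ) := by
    apply Finset.sum_le_sum
    intro n hn
    rw [Finset.mem_Icc] at hn
    have := dsq_le n (by omega)
    calc ((Nat.divisors (n ^ 2)).card : ℝ) ^ 2
        = (((Nat.divisors (n ^ 2)).card ^ 2 : ℕ) : ℝ) := by push_cast; ring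
      _ ≤ ((ζ ^ 9 : ArithmeticFunction ℕ) n : ℝ) := by exact_mod_cast this
  have step2 := tau_sum N hN1
  have step3 : (N : ℝ) * (1 + Real.log N) ^ 8 ≤ X * (5 / 2 * Real.log X) ^ 8 := by
    have h1 : 1 + Real.log N ≤ 5 / 2 * Real.log X := by
      have : (1 : ℝ) ≤ 3 / 2 * Real.log X := by linarith
      linarith
    have h2 : (0 : ℝ) ≤ 1 + Real.log N := by
      have : (0 : ℝ) ≤ Real.log N := Real.log_nonneg (by exact_mod_cast hN1)
      linarith
    have h3 : (1 + Real.log N) ^ 8 ≤ (5 / 2 * Real.log X) ^ 8 := by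
      gcongr
    have h4 : (0 : ℝ) ≤ (5 / 2 * Real.log X) ^ 8 := by positivity
    calc (N : ℝ) * (1 + Real.log N) ^ 8 ≤ (N : ℝ) * (5 / 2 * Real.log X) ^ 8 := by
          apply mul_le_mul_of_nonneg_left h3 (Nat.cast_nonneg N)
      _ ≤ X * (5 / 2 * Real.log X) ^ 8 := mul_le_mul_of_nonneg_right hNX h4
  calc ∑ n ∈ Finset.Icc 1 N, ((Nat.divisors (n ^ 2)).card : ℝ) ^ 2
      ≤ (N : ℝ) * (1 + Real.log N) ^ 8 := step1.trans step2
    _ ≤ X * (5 / 2 * Real.log X) ^ 8 := step3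
    _ = (5 / 2) ^ 8 * X * Real.log X ^ 8 := by ring
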